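/- Let G be a finite simple graph with at least one vertex, with maximal cliques C₁, …, C_N, and let Gᵉ be its higher-dimensional context extension. Then the maximal cliques of Gᵉ are exactly the sets C_k ∪ {x_k} for k = 1, …, N. -/

import Mathlib

open Finset

/-- A maximal clique of a simple graph, as a finite set of vertices. -/
def IsMaxClique {V : Type*} (G : SimpleGraph V) (C : Finset V) : Prop :=
  G.IsClique (C : Set V) ∧ ∀ D : Finset V, G.IsClique (D : Set V) → C ⊆ D → D = C

/-- The finite set of all maximal cliques of a finite simple graph. -/
noncomputable def maxCliques {V : Type*} [Fintype V] (G : SimpleGraph V) :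
    Finset (Finset V) := by
  classical exact Finset.univ.filter (fun C => IsMaxClique G C)

/-- `c(G)`: the total number of maximal cliques of `G`. -/
noncomputable def numMaxCliques {V : Type*} [Fintype V] (G : SimpleGraph V) : ℕ :=
  (maxCliques G).card

/-- `c_G(i)`: the number of maximal cliques of `G` containing the vertex `i`. -/
noncomputable def cG {V : Type*} [Fintype V] (G : SimpleGraph V) (i : V) : ℕ := by
  classical exact ((maxCliques G).filter (fun C => i ∈ C)).card

/-- A state on a finite simple graph: values in `[0,1]` summing to `1` on each
maximal clique. -/
def IsGraphState {V : Type*} [Fintype V] (G : SimpleGraph V) (p : V → ℝ) : Prop :=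
  (∀ i, 0 ≤ p i ∧ p i ≤ 1) ∧ ∀ C ∈ maxCliques G, ∑ i ∈ C, p i = 1

/-- An independent set of a simple graph: pairwise non-adjacent vertices. -/
def IsIndep {V : Type*} (G : SimpleGraph V) (I : Finset V) : Prop :=
  ∀ i ∈ I, ∀ j ∈ I, i ≠ j → ¬ G.Adj i j

/-- `α(G; w)`: the maximum weight of an independent set of `G` for the weight `w`. -/
noncomputable def alphaW {V : Type*} [Fintype V] (G : SimpleGraph V) (w : V → ℝ) : ℝ :=
  sSup { x : ℝ | ∃ I : Finset V, IsIndep G I ∧ x = ∑ i ∈ I, w i }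

/-- The higher-dimensional context extension `Gᵉ` of `G`: one new vertex is added for
each maximal clique of `G`, adjacent exactly to the vertices of that clique; the new
vertices are pairwise non-adjacent and the old adjacency is kept. -/
noncomputable def contextExtension {V : Type*} [Fintype V] (G : SimpleGraph V) :
    SimpleGraph (V ⊕ {C : Finset V // C ∈ maxCliques G}) where
  Adj x y :=
    match x, y with
    | Sum.inl a, Sum.inl b => G.Adj a b
    | Sum.inl a, Sum.inr C => a ∈ (C : Finset V)
    | Sum.inr C, Sum.inl a => a ∈ (C : Finset V)
    | Sum.inr _, Sum.inr _ => False
  symm := by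
    refine ⟨?_⟩
    rintro (a | C) (b | D) h
    · exact G.adj_symm h
    · exact h
    · exact h
    · exact h
  loopless := by
    refine ⟨?_⟩
    rintro (a | C) h
    · exact G.irrefl h
    · exact h

lemma mem_maxCliques_iff {V : Type*} [Fintype V] (G : SimpleGraph V) (C : Finset V) :
    C ∈ maxCliques G ↔ IsMaxClique G C := by
  classical
  simp [maxCliques]

lemma exists_maxClique_superset {V : Type*} [Fintype V] (G : SimpleGraph V) (A : Finset V)
    (hA : G.IsClique (A : Set V)) : ∃ C ∈ maxCliques G, A ⊆ C := by
  classical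
  have hne : (Finset.univ.filter
      (fun D : Finset V => G.IsClique (D : Set V) ∧ A ⊆ D)).Nonempty :=
    ⟨A, by simp [hA]⟩
  obtain ⟨C, hC, hmax⟩ := Finset.exists_max_image _ (fun D => D.card) hne
  simp only [Finset.mem_filter, Finset.mem_univ, true_and] at hC
  refine ⟨C, ?_, hC.2⟩
  rw [mem_maxCliques_iff]
  refine ⟨hC.1, fun D hD hCD => ?_⟩
  have hcard : D.card ≤ C.card := by
    have := hmax D (by simp [hD, hC.2.trans hCD])
    simpa using this
  exact (Finset.eq_of_subset_of_card_le hCD hcard).symm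

lemma extClique {V : Type*} [Fintype V] [DecidableEq V] (G : SimpleGraph V)
    (C : Finset V) (hC : C ∈ maxCliques G) :
    (contextExtension G).IsClique
      ((insert (Sum.inr ⟨C, hC⟩) (C.image Sum.inl) :
        Finset (V ⊕ {C : Finset V // C ∈ maxCliques G})) : Set _) := by
  have hCcl : G.IsClique (C : Set V) := ((mem_maxCliques_iff G C).1 hC).1
  intro x hx y hy hne
  simp only [Finset.coe_insert, Set.mem_insert_iff, Finset.coe_image, Set.mem_image,
    Finset.mem_coe] at hx hy
  rcases hx with rfl | ⟨a, ha, rfl⟩ <;> rcases hy with rfl | ⟨b, hb, rfl⟩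
  · exact absurd rfl hne
  · exact hb
  · exact ha
  · exact hCcl ha hb (by simpa using hne)

/-- **The maximal cliques of the higher-dimensional context extension `Gᵉ` are exactly
the sets `C ∪ {x_C}`**, where `C` ranges over the maximal cliques of `G` and `x_C` is the
new vertex added for `C`. -/
theorem maxCliques_contextExtension {V : Type*} [Fintype V] [DecidableEq V] [Nonempty V]
    (G : SimpleGraph V)
    (D : Finset (V ⊕ {C : Finset V // C ∈ maxCliques G})) :
    IsMaxClique (contextExtension G) D ↔
      ∃ (C : Finset V) (hC : C ∈ maxCliques G),
        D = insert (Sum.inr ⟨C, hC⟩) (C.image Sum.inl) := by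
  classical
  constructor
  · rintro ⟨hclique, hmax⟩
    set A : Finset V := D.preimage Sum.inl (Sum.inl_injective.injOn) with hAdef
    have hAmem : ∀ a, a ∈ A ↔ Sum.inl a ∈ D := fun a => Finset.mem_preimage
    have hAclique : G.IsClique (A : Set V) := by
      intro a ha b hb hab
      have := hclique (Finset.mem_coe.2 ((hAmem a).1 ha)) (Finset.mem_coe.2 ((hAmem b).1 hb))
        (by simpa using hab)
      exact this
    by_cases h : ∃ C0 : {C : Finset V // C ∈ maxCliques G}, Sum.inr C0 ∈ D
    · obtain ⟨⟨C0, h0⟩, hin⟩ := h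
      have hsubE : D ⊆ insert (Sum.inr ⟨C0, h0⟩) (C0.image Sum.inl) := by
        rintro (a | Cx) hx
        · have hne : (Sum.inl a) ≠ (Sum.inr ⟨C0, h0⟩ : V ⊕ {C : Finset V // C ∈ maxCliques G}) := by simp
          have hadj := hclique (Finset.mem_coe.2 hx) (Finset.mem_coe.2 hin) hne
          have : a ∈ C0 := hadj
          exact Finset.mem_insert_of_mem (Finset.mem_image_of_mem _ this)
        · by_cases hEq : Cx = ⟨C0, h0⟩
          · subst hEq; exact Finset.mem_insert_self _ _
          · have hne : (Sum.inr Cx : V ⊕ _) ≠ Sum.inr ⟨C0, h0⟩ := by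
              simpa using hEq
            exact absurd (hclique (Finset.mem_coe.2 hx) (Finset.mem_coe.2 hin) hne) (by
              intro hadj; exact hadj)
      exact ⟨C0, h0, (hmax _ (extClique G C0 h0) hsubE).symm⟩
    · push_neg at h
      obtain ⟨C, hC, hAC⟩ := exists_maxClique_superset G A hAclique
      have hsubE : D ⊆ insert (Sum.inr ⟨C, hC⟩) (C.image Sum.inl) := by
        rintro (a | Cx) hx
        · exact Finset.mem_insert_of_mem
            (Finset.mem_image_of_mem _ (hAC ((hAmem a).2 hx)))
        · exact absurd hx (h Cx)
      exact ⟨C, hC, (hmax _ (extClique G C hC) hsubE).symm⟩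
  · rintro ⟨C, hC, rfl⟩
    refine ⟨extClique G C hC, fun D' hD' hsub => ?_⟩
    have hinr : (Sum.inr ⟨C, hC⟩ : V ⊕ _) ∈ D' := hsub (Finset.mem_insert_self _ _)
    refine Finset.Subset.antisymm ?_ hsub
    rintro (a | Cx) hx
    · have hne : (Sum.inl a) ≠ (Sum.inr ⟨C, hC⟩ : V ⊕ {C : Finset V // C ∈ maxCliques G}) := by simp
      have hadj := hD' (Finset.mem_coe.2 hx) (Finset.mem_coe.2 hinr) hne
      have : a ∈ C := hadj
      exact Finset.mem_insert_of_mem (Finset.mem_image_of_mem _ this)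
    · by_cases hEq : Cx = ⟨C, hC⟩
      · subst hEq; exact Finset.mem_insert_self _ _
      · have hne : (Sum.inr Cx : V ⊕ _) ≠ Sum.inr ⟨C, hC⟩ := by simpa using hEq
        exact absurd (hD' (Finset.mem_coe.2 hx) (Finset.mem_coe.2 hinr) hne)
          (fun hadj => hadj)
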